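/- Let B be a densely ordered linear order, and let (M b) and (N b) for b : B be two families of nonempty scattered linear orders. Then every order isomorphism f : Σₗ (b : B), M b ≅ Σₗ (b : B), N b maps fibers onto fibers: for every b : B there exists c : B such that f maps the fiber {b} × M b bijectively onto the fiber {c} × N c. -/

import Mathlib

theorem sigma_eta_aux {ι : Type*} {α : ι → Type*} (p : Σ i, α i) (b : ι)
    (h : p.1 = b) : p = ⟨b, h ▸ p.2⟩ := by
  cases p; subst h; rfl

-- key: first coordinate constant on fibers
theorem aux_const (B : Type*) [LinearOrder B] [DenselyOrdered B]
    (M N : B → Type*) [∀ b, LinearOrder (M b)] [∀ b, LinearOrder (N b)]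
    [∀ b, Nonempty (N b)]
    (hM : ∀ b, IsEmpty (ℚ ↪o M b))
    (f : Lex (Σ b : B, M b) ≃o Lex (Σ b : B, N b)) (b : B) (x x' : M b)
    (hlt : x < x') :
    (ofLex (f (toLex ⟨b, x⟩))).1 = (ofLex (f (toLex ⟨b, x'⟩))).1 := by
  set c := (ofLex (f (toLex ⟨b, x⟩))).1 with hc
  set c' := (ofLex (f (toLex ⟨b, x'⟩))).1 with hc'
  by_contra hne
  have hflt : f (toLex ⟨b, x⟩) < f (toLex ⟨b, x'⟩) := by
    apply f.strictMono
    exact Sigma.Lex.lt_def.2 (Or.inr ⟨rfl, hlt⟩)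
  have hcc : c < c' := by
    rcases Sigma.Lex.lt_def.1 hflt with h | ⟨h, _⟩
    · exact h
    · exact absurd h hne
  -- Ioo c c' is nonempty, densely ordered, nontrivial
  obtain ⟨d, hd1, hd2⟩ := exists_between hcc
  obtain ⟨d', hd'1, hd'2⟩ := exists_between hd1
  have : Nontrivial (Set.Ioo c c') :=
    ⟨⟨d, hd1, hd2⟩, ⟨d', hd'1, hd'2.trans hd2⟩, by
      simp only [ne_eq, Subtype.mk.injEq]; exact (ne_of_gt hd'2)⟩
  obtain ⟨e⟩ := Order.embedding_from_countable_to_dense (α := ℚ) (β := Set.Ioo c c')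
  -- map each rational into Σₗ N inside the interval, pull back
  classical
  set P : ℚ → Lex (Σ b, N b) := fun q => toLex ⟨(e q : B), Classical.arbitrary (N (e q))⟩
    with hP
  have hPmono : StrictMono P := fun q q' h =>
    Sigma.Lex.lt_def.2 (Or.inl (by exact_mod_cast e.strictMono h))
  have hlow : ∀ q, f (toLex ⟨b, x⟩) < P q := fun q => by
    apply Sigma.Lex.lt_def.2
    exact Or.inl (e q).2.1
  have hhigh : ∀ q, P q < f (toLex ⟨b, x'⟩) := fun q => by
    apply Sigma.Lex.lt_def.2
    exact Or.inl (e q).2.2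
  set F : ℚ → Lex (Σ b, M b) := fun q => f.symm (P q) with hF
  have hFmono : StrictMono F := fun q q' h => f.symm.strictMono (hPmono h)
  have hF1 : ∀ q, (ofLex (F q)).1 = b := by
    intro q
    have h1 : toLex ⟨b, x⟩ < F q := by
      have := f.symm.strictMono (hlow q)
      simpa using this
    have h2 : F q < toLex ⟨b, x'⟩ := by
      have := f.symm.strictMono (hhigh q)
      simpa using this
    rcases Sigma.Lex.lt_def.1 h1 with ha | ⟨ha, _⟩ <;>
      rcases Sigma.Lex.lt_def.1 h2 with hb | ⟨hb, _⟩
    · exact absurd (ha.trans hb) (lt_irrefl b)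
    · exact hb
    · exact ha.symm
    · exact hb
  set G : ℚ → M b := fun q => (hF1 q) ▸ (ofLex (F q)).2 with hG
  have hFG : ∀ q, F q = toLex ⟨b, G q⟩ := fun q =>
    congrArg toLex (sigma_eta_aux (ofLex (F q)) b (hF1 q))
  have hGmono : StrictMono G := by
    intro q q' h
    have := hFmono h
    rw [hFG q, hFG q'] at this
    rcases Sigma.Lex.lt_def.1 this with ha | ⟨_, hb⟩
    · exact absurd ha (lt_irrefl b)
    · exact hb
  exact (hM b).false (OrderEmbedding.ofStrictMono G hGmono)


theorem aux_const' (B : Type*) [LinearOrder B] [DenselyOrdered B]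
    (M N : B → Type*) [∀ b, LinearOrder (M b)] [∀ b, LinearOrder (N b)]
    [∀ b, Nonempty (N b)]
    (hM : ∀ b, IsEmpty (ℚ ↪o M b))
    (f : Lex (Σ b : B, M b) ≃o Lex (Σ b : B, N b)) (b : B) (x x' : M b) :
    (ofLex (f (toLex ⟨b, x⟩))).1 = (ofLex (f (toLex ⟨b, x'⟩))).1 := by
  rcases lt_trichotomy x x' with h | h | h
  · exact aux_const B M N hM f b x x' h
  · rw [h]
  · exact (aux_const B M N hM f b x' x h).symm

/-- If `B` is a densely ordered linear order and `(M b)`, `(N b)` are families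
of nonempty scattered linear orders (no order embedding of `ℚ`), then every
order isomorphism `Σₗ (b : B), M b ≃o Σₗ (b : B), N b` maps fibers bijectively
onto fibers. -/
theorem orderIso_maps_fibers_onto_fibers (B : Type*) [LinearOrder B]
    [DenselyOrdered B]
    (M N : B → Type*) [∀ b, LinearOrder (M b)] [∀ b, LinearOrder (N b)]
    [∀ b, Nonempty (M b)] [∀ b, Nonempty (N b)]
    (hM : ∀ b, IsEmpty (ℚ ↪o M b)) (hN : ∀ b, IsEmpty (ℚ ↪o N b))
    (f : Lex (Σ b : B, M b) ≃o Lex (Σ b : B, N b)) :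
    ∀ b : B, ∃ c : B,
      (∀ x : M b, (ofLex (f (toLex ⟨b, x⟩))).1 = c) ∧
      (∀ y : N c, ∃ x : M b, f (toLex ⟨b, x⟩) = toLex ⟨c, y⟩) := by
  intro b
  classical
  obtain ⟨x₀⟩ := ‹∀ b, Nonempty (M b)› b
  set c := (ofLex (f (toLex ⟨b, x₀⟩))).1 with hc
  refine ⟨c, fun x => (aux_const' B M N hM f b x x₀), ?_⟩
  intro y
  set y₀ : N c := (ofLex (f (toLex ⟨b, x₀⟩))).2 with hy₀
  have hfy₀ : f (toLex ⟨b, x₀⟩) = toLex ⟨c, y₀⟩ :=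
    congrArg toLex (sigma_eta_aux (ofLex (f (toLex ⟨b, x₀⟩))) c rfl)
  have hsymm₀ : f.symm (toLex ⟨c, y₀⟩) = toLex ⟨b, x₀⟩ := by
    rw [← hfy₀]; exact f.symm_apply_apply _
  have hb : (ofLex (f.symm (toLex ⟨c, y⟩))).1 = b := by
    have := aux_const' B N M hN f.symm c y y₀
    rw [hsymm₀] at this
    simpa using this
  refine ⟨hb ▸ (ofLex (f.symm (toLex ⟨c, y⟩))).2, ?_⟩
  have h2 : f.symm (toLex ⟨c, y⟩) = toLex ⟨b, hb ▸ (ofLex (f.symm (toLex ⟨c, y⟩))).2⟩ :=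
    congrArg toLex (sigma_eta_aux (ofLex (f.symm (toLex ⟨c, y⟩))) b hb)
  rw [← h2]
  exact f.apply_symm_apply _
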